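/- Let α ∈ [0,1], assume R^min < R^max and Σ_{i∈L} d_i > 0, and let F(r) = α·D*(r)/(Σ_{i∈L} d_i) + (1−α)·(R^max − r)/(R^max − R^min). Then the supremum of F over the interval [R^min, R^max] is attained at some r in the finite set R = {dist(ℓ,i) : ℓ ∈ I, i ∈ L, dist(ℓ,i) ≥ R^min}; in particular, sup_{r ∈ [R^min, R^max]} F(r) = max_{r ∈ R} F(r). -/

import Mathlib

/-- For a reachability radius `r`, the cover set of site `i` is the set of
locations of interest within distance `r` of `i`. -/
def coverSet {ι κ : Type*} (dist : κ → ι → ℝ) (r : ℝ) (i : ι) : Set κ :=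
  {ℓ | dist ℓ i ≤ r}

/-- A selection `A` of candidate sites is feasible for the Mixed Pack-and-Cover
problem `MPC(r)` with budget `B` if its total cost is within budget and the
cover sets of its sites cover all locations of interest. -/
def MPCFeasible {ι κ : Type*} (dist : κ → ι → ℝ) (c : ι → ℝ) (B r : ℝ) (A : Finset ι) : Prop :=
  ∑ i ∈ A, c i ≤ B ∧ (⋃ i ∈ A, coverSet dist r i) = Set.univ

/-- `R^min`: the maximum over locations of interest of the distance to the
nearest candidate site. -/
noncomputable def RMinRadius {ι κ : Type*} [Fintype ι] [Fintype κ] [Nonempty ι] [Nonempty κ]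
    (dist : κ → ι → ℝ) : ℝ :=
  Finset.univ.sup' Finset.univ_nonempty fun ℓ : κ =>
    Finset.univ.inf' Finset.univ_nonempty fun i : ι => dist ℓ i

/-- `R^max`: the maximum over locations of interest of the distance to the
farthest candidate site. -/
noncomputable def RMaxRadius {ι κ : Type*} [Fintype ι] [Fintype κ] [Nonempty ι] [Nonempty κ]
    (dist : κ → ι → ℝ) : ℝ :=
  Finset.univ.sup' Finset.univ_nonempty fun ℓ : κ =>
    Finset.univ.sup' Finset.univ_nonempty fun i : ι => dist ℓ i

/-- The set `R` of all distances `dist ℓ i` that are at least `R^min`. -/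
noncomputable def distSet {ι κ : Type*} [Fintype ι] [Fintype κ] [Nonempty ι] [Nonempty κ]
    (dist : κ → ι → ℝ) : Finset ℝ :=
  (Finset.univ.image fun p : κ × ι => dist p.1 p.2).filter fun x => RMinRadius dist ≤ x

theorem stmt_8 {ι κ : Type*} [Fintype ι] [Nonempty ι] [Fintype κ] [Nonempty κ]
    (dist : κ → ι → ℝ) (hdist : ∀ ℓ i, 0 ≤ dist ℓ i)
    (c d : ι → ℝ) (hc : ∀ i, 0 ≤ c i) (hd : ∀ i, 0 ≤ d i)
    (B : ℝ) (hB : 0 ≤ B)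
    (α : ℝ) (hα : α ∈ Set.Icc (0 : ℝ) 1)
    (hRR : RMinRadius dist < RMaxRadius dist)
    (hdpos : 0 < ∑ i : ι, d i)
    (Dstar : ℝ → ℝ)
    -- if `MPC(r)` is feasible, `Dstar r` is the maximum demand of a feasible selection
    (hDstar : ∀ r : ℝ, (∃ A : Finset ι, MPCFeasible dist c B r A) →
      IsGreatest {x | ∃ A : Finset ι, MPCFeasible dist c B r A ∧ ∑ i ∈ A, d i = x} (Dstar r))
    -- if `MPC(r)` is infeasible, `Dstar r = 0`
    (hDstar0 : ∀ r : ℝ, ¬(∃ A : Finset ι, MPCFeasible dist c B r A) → Dstar r = 0)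
    (F : ℝ → ℝ)
    (hF : ∀ r : ℝ, F r = α * Dstar r / (∑ i : ι, d i) +
      (1 - α) * (RMaxRadius dist - r) / (RMaxRadius dist - RMinRadius dist)) :
    -- the supremum of `F` over `[R^min, R^max]` is attained at some `r₀ ∈ R`,
    -- and it equals the maximum of `F` over `R`
    ∃ r₀ ∈ distSet dist,
      r₀ ∈ Set.Icc (RMinRadius dist) (RMaxRadius dist) ∧
      IsGreatest (F '' Set.Icc (RMinRadius dist) (RMaxRadius dist)) (F r₀) ∧
      ∀ s ∈ distSet dist, F s ≤ F r₀ := by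
  classical
  obtain ⟨hα0, hα1⟩ := hα
  set Rmin := RMinRadius dist with hRmindef
  set Rmax := RMaxRadius dist with hRmaxdef
  have hRminMem : Rmin ∈ distSet dist := by
    obtain ⟨ℓ, -, hℓ⟩ := Finset.exists_mem_eq_sup' (Finset.univ_nonempty)
      (fun ℓ : κ => Finset.univ.inf' Finset.univ_nonempty fun i : ι => dist ℓ i)
    obtain ⟨i, -, hi⟩ := Finset.exists_mem_eq_inf' (Finset.univ_nonempty) (fun i : ι => dist ℓ i)
    have hval : Rmin = dist ℓ i := by rw [hRmindef, RMinRadius, hℓ, hi]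
    simp only [distSet, Finset.mem_filter, Finset.mem_image]
    exact ⟨⟨(ℓ, i), Finset.mem_univ _, hval.symm⟩, le_refl _⟩
  have hmemBounds : ∀ x ∈ distSet dist, Rmin ≤ x ∧ x ≤ Rmax := by
    intro x hx
    simp only [distSet, Finset.mem_filter, Finset.mem_image] at hx
    obtain ⟨⟨p, -, hp⟩, hge⟩ := hx
    refine ⟨hge, ?_⟩
    rw [← hp, hRmaxdef, RMaxRadius]
    exact le_trans (Finset.le_sup' (fun i => dist p.1 i) (Finset.mem_univ p.2))
      (Finset.le_sup' (fun ℓ : κ => Finset.univ.sup' Finset.univ_nonempty fun i : ι => dist ℓ i)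
        (Finset.mem_univ p.1))
  have hDeq : ∀ r ρ : ℝ, (∀ ℓ i, dist ℓ i ≤ r ↔ dist ℓ i ≤ ρ) → Dstar r = Dstar ρ := by
    intro r ρ h
    have hcov : ∀ A : Finset ι, MPCFeasible dist c B r A ↔ MPCFeasible dist c B ρ A := by
      intro A
      have hcs : ∀ i, coverSet dist r i = coverSet dist ρ i := by
        intro i; ext ℓ; exact h ℓ i
      unfold MPCFeasible
      simp_rw [hcs]
    by_cases hfeas : ∃ A, MPCFeasible dist c B r A
    · have hfeas' : ∃ A, MPCFeasible dist c B ρ A := by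
        obtain ⟨A, hA⟩ := hfeas; exact ⟨A, (hcov A).1 hA⟩
      have h1 := hDstar r hfeas
      have h2 := hDstar ρ hfeas'
      have hset : {x | ∃ A, MPCFeasible dist c B r A ∧ ∑ i ∈ A, d i = x}
          = {x | ∃ A, MPCFeasible dist c B ρ A ∧ ∑ i ∈ A, d i = x} := by
        ext x; simp_rw [hcov]
      rw [hset] at h1
      exact h1.unique h2
    · have hfeas' : ¬ ∃ A, MPCFeasible dist c B ρ A := by
        rintro ⟨A, hA⟩; exact hfeas ⟨A, (hcov A).2 hA⟩
      rw [hDstar0 r hfeas, hDstar0 ρ hfeas']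
  have hround : ∀ r ∈ Set.Icc Rmin Rmax, ∃ ρ ∈ distSet dist, F r ≤ F ρ := by
    intro r hr
    set T := (distSet dist).filter (· ≤ r) with hT
    have hTne : T.Nonempty := ⟨Rmin, Finset.mem_filter.2 ⟨hRminMem, hr.1⟩⟩
    set ρ := T.max' hTne with hρ
    have hρT : ρ ∈ T := T.max'_mem hTne
    have hρD : ρ ∈ distSet dist := (Finset.mem_filter.1 hρT).1
    have hρr : ρ ≤ r := by
      have := (Finset.mem_filter.1 hρT).2
      simpa using this
    have hρmin : Rmin ≤ ρ := (hmemBounds ρ hρD).1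
    refine ⟨ρ, hρD, ?_⟩
    have hiff : ∀ ℓ i, dist ℓ i ≤ r ↔ dist ℓ i ≤ ρ := by
      intro ℓ i
      constructor
      · intro hle
        by_cases hge : Rmin ≤ dist ℓ i
        · refine T.le_max' _ (Finset.mem_filter.2 ⟨?_, by simpa using hle⟩)
          simp only [distSet, Finset.mem_filter, Finset.mem_image]
          exact ⟨⟨(ℓ, i), Finset.mem_univ _, rfl⟩, hge⟩
        · exact le_trans (le_of_not_ge hge) hρmin
      · intro h; exact h.trans hρr
    have hD : Dstar r = Dstar ρ := hDeq r ρ hiff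
    rw [hF r, hF ρ, hD]
    have hden : 0 < Rmax - Rmin := sub_pos.2 hRR
    have hnum : Rmax - r ≤ Rmax - ρ := sub_le_sub_left hρr Rmax
    have h1α : (0:ℝ) ≤ 1 - α := sub_nonneg.2 hα1
    have hmul : (1-α)*(Rmax-r) ≤ (1-α)*(Rmax-ρ) := mul_le_mul_of_nonneg_left hnum h1α
    exact add_le_add_right ((div_le_div_iff_of_pos_right hden).2 hmul) _
  obtain ⟨r₀, hr₀D, hr₀max⟩ := Finset.exists_max_image (distSet dist) F ⟨Rmin, hRminMem⟩
  have hr₀Icc : r₀ ∈ Set.Icc Rmin Rmax := ⟨(hmemBounds r₀ hr₀D).1, (hmemBounds r₀ hr₀D).2⟩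
  refine ⟨r₀, hr₀D, hr₀Icc, ⟨⟨r₀, hr₀Icc, rfl⟩, ?_⟩, hr₀max⟩
  rintro x ⟨r, hr, rfl⟩
  obtain ⟨ρ, hρD, hle⟩ := hround r hr
  exact hle.trans (hr₀max ρ hρD)
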